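/- There exists ε* ∈ (0,1) such that for every ε₀ ∈ (0, ε*) there are constants 0 < C₁ ≤ C₂, depending only on ε₀ and n, with the following property: for every nonempty closed set L ⊊ S and every x ∈ Ω = S \ L, one has C₁·dist(x,L) ≤ 1 − f(x) ≤ C₂·dist(x,L). (Proposition 1.1, estimate (1.4): the height of the invariant graph G above x is comparable to the distance of x to the limit set.) -/

import Mathlib

/-- The dome `H(w,r)`: the intersection of the open unit ball with the open ball
centered at `(cos θ)⁻¹ • w` of radius `tan θ`, where `cos θ = 1 − r²/2`; its boundary
sphere meets the unit sphere orthogonally along `∂Cap(w,r)` (the hyperbolic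
half-space over the cap `Cap(w,r)` in the ball model). -/
noncomputable def dome (n : ℕ) (w : EuclideanSpace ℝ (Fin (n + 1))) (r : ℝ) :
    Set (EuclideanSpace ℝ (Fin (n + 1))) :=
  Metric.ball 0 1 ∩
    Metric.ball ((1 - r ^ 2 / 2)⁻¹ • w)
      (Real.sqrt (1 - (1 - r ^ 2 / 2) ^ 2) / (1 - r ^ 2 / 2))

/-- The union `⋃_{w ∈ Ω} H_w` of the domes over the caps `B_w = Cap(w, ε₀·dist(w,L))`,
`w ∈ Ω = S \ L`. -/
noncomputable def domeUnion (n : ℕ) (L : Set (EuclideanSpace ℝ (Fin (n + 1)))) (ε₀ : ℝ) :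
    Set (EuclideanSpace ℝ (Fin (n + 1))) :=
  ⋃ w ∈ Metric.sphere (0 : EuclideanSpace ℝ (Fin (n + 1))) 1 \ L,
    dome n w (ε₀ * Metric.infDist w L)

/-- The graph function `f : Ω → (0,1]`,
`f(x) = inf({1} ∪ {t ∈ (0,1) : t•x ∈ ⋃_{w∈Ω} H_w})`; the invariant graph is
`G = {f(x)•x : x ∈ Ω} = ∂(⋃_{w∈Ω} H_w) ∩ B^{n+1}`. -/
noncomputable def graphHeight (n : ℕ) (L : Set (EuclideanSpace ℝ (Fin (n + 1))))
    (ε₀ : ℝ) (x : EuclideanSpace ℝ (Fin (n + 1))) : ℝ :=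
  sInf ({1} ∪ {t : ℝ | t ∈ Set.Ioo (0 : ℝ) 1 ∧ t • x ∈ domeUnion n L ε₀})

/-- Radial membership in a dome over its own center: if `(1 - r²/2)(1 + t²) < 2t`
then `t • x ∈ dome n x r`. -/
lemma mem_dome_radial (n : ℕ) (x : EuclideanSpace ℝ (Fin (n + 1))) (hx : ‖x‖ = 1)
    {r t : ℝ} (hr0 : 0 < r) (hr1 : r < 1) (ht0 : 0 < t) (ht1 : t < 1)
    (h : (1 - r ^ 2 / 2) * (1 + t ^ 2) < 2 * t) :
    t • x ∈ dome n x r := by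
  have ha0 : (0:ℝ) < 1 - r ^ 2 / 2 := by nlinarith
  have ha1 : 1 - r ^ 2 / 2 < 1 := by nlinarith
  set a := 1 - r ^ 2 / 2 with ha
  constructor
  · rw [Metric.mem_ball, dist_zero_right, norm_smul, hx, mul_one,
      Real.norm_eq_abs, abs_of_pos ht0]
    exact ht1
  · rw [Metric.mem_ball, dist_eq_norm]
    have he : t • x - a⁻¹ • x = (t - a⁻¹) • x := by rw [sub_smul]
    rw [he, norm_smul, hx, mul_one, Real.norm_eq_abs]
    have hainv : 1 < a⁻¹ := (one_lt_inv₀ ha0).2 ha1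
    rw [abs_of_neg (by linarith : t - a⁻¹ < 0)]
    rw [lt_div_iff₀ ha0]
    have hkey : (1 - a * t) ^ 2 < 1 - a ^ 2 := by nlinarith
    have h2 : 1 - a * t < Real.sqrt (1 - a ^ 2) :=
      (Real.lt_sqrt (by nlinarith)).2 hkey
    have h3 : -(t - a⁻¹) * a = 1 - a * t := by field_simp; ring
    linarith [h3 ▸ h2]

/-- Pure real-number inequalities extracted from dome membership. -/
lemma real_dome_bounds (a t p : ℝ) (ha : 1/2 < a) (ha1 : a < 1)
    (ht0 : 0 < t) (ht1 : t < 1) (hp1 : p ≤ 1)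
    (h : t ^ 2 - 2 * (t * a⁻¹) * p + a⁻¹ ^ 2 < (1 - a ^ 2) / a ^ 2) :
    (1 - t) ^ 2 < 4 * t * (1 - a) ∧ a < p := by
  have ha0 : 0 < a := by linarith
  have hane : a ≠ 0 := ne_of_gt ha0
  have e : (1 - a ^ 2) / a ^ 2 = a⁻¹ ^ 2 - 1 := by field_simp
  rw [e] at h
  have h2 : t ^ 2 + 1 < 2 * t * a⁻¹ * p := by linarith
  have e2 : a * (2 * t * a⁻¹ * p) = 2 * t * p := by
    field_simp
  have hkey : a * (t ^ 2 + 1) < 2 * t * p := by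
    nlinarith [mul_lt_mul_of_pos_left h2 ha0]
  have hap : a < p := by nlinarith [sq_nonneg (t - 1)]
  refine ⟨?_, hap⟩
  have h8 : 2 * t * p ≤ 2 * t := by nlinarith
  -- a * (1-t)^2 = a*(t^2+1) - 2*a*t < 2*t - 2*a*t = 2*t*(1-a), and 1/2 < a
  nlinarith [sq_nonneg (1 - t)]

/-- Consequences of membership of a radial point in a dome: height and horizontal
localization bounds. -/
lemma dome_mem_bounds (n : ℕ) (x w : EuclideanSpace ℝ (Fin (n + 1)))
    (hx : ‖x‖ = 1) (hw : ‖w‖ = 1) {r t : ℝ} (hr0 : 0 < r) (hr1 : r < 1)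
    (ht0 : 0 < t) (ht1 : t < 1) (h : t • x ∈ dome n w r) :
    (1 - t) ^ 2 < 2 * r ^ 2 ∧ ‖x - w‖ < r := by
  have ha : (1:ℝ)/2 < 1 - r ^ 2 / 2 := by nlinarith
  have ha1 : 1 - r ^ 2 / 2 < 1 := by nlinarith
  have ha0 : (0:ℝ) < 1 - r ^ 2 / 2 := by linarith
  obtain ⟨-, hball⟩ := h
  rw [Metric.mem_ball, dist_eq_norm] at hball
  have hsq : ‖t • x - (1 - r ^ 2 / 2)⁻¹ • w‖ ^ 2
      < (1 - (1 - r ^ 2 / 2) ^ 2) / (1 - r ^ 2 / 2) ^ 2 := by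
    have h2 := pow_lt_pow_left₀ hball (norm_nonneg _) (n := 2) (by norm_num)
    calc ‖t • x - (1 - r ^ 2 / 2)⁻¹ • w‖ ^ 2
        < (Real.sqrt (1 - (1 - r ^ 2 / 2) ^ 2) / (1 - r ^ 2 / 2)) ^ 2 := h2
      _ = (1 - (1 - r ^ 2 / 2) ^ 2) / (1 - r ^ 2 / 2) ^ 2 := by
          rw [div_pow, Real.sq_sqrt (by nlinarith)]
  have hexp : ‖t • x - (1 - r ^ 2 / 2)⁻¹ • w‖ ^ 2
      = t ^ 2 - 2 * (t * (1 - r ^ 2 / 2)⁻¹) * inner ℝ x w + (1 - r ^ 2 / 2)⁻¹ ^ 2 := by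
    rw [norm_sub_sq_real, norm_smul, norm_smul, real_inner_smul_left,
      real_inner_smul_right, hx, hw, Real.norm_eq_abs, Real.norm_eq_abs,
      abs_of_pos ht0, abs_of_pos (inv_pos.2 ha0)]
    ring
  rw [hexp] at hsq
  have hp1 : (inner ℝ x w : ℝ) ≤ 1 := by
    have := real_inner_le_norm x w
    rw [hx, hw, one_mul] at this
    exact this
  obtain ⟨hA, hB⟩ := real_dome_bounds (1 - r ^ 2 / 2) t (inner ℝ x w) ha ha1 ht0 ht1 hp1 hsq
  constructor
  · -- (1 - t)^2 < 4*t*(r^2/2) = 2*t*r^2 < 2*r^2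
    nlinarith [sq_nonneg r]
  · have h9 : ‖x - w‖ ^ 2 < r ^ 2 := by
      rw [norm_sub_sq_real, hx, hw]
      nlinarith
    exact lt_of_pow_lt_pow_left₀ 2 hr0.le h9

/-- Proposition 1.1, estimate (1.4): for all sufficiently small `ε₀` there are
constants `0 < C₁ ≤ C₂` depending only on `ε₀` and `n` such that, for every nonempty
closed proper subset `L` of the sphere and every `x ∈ Ω = S \ L`, the height `f(x)`
of the invariant graph satisfies `C₁·dist(x,L) ≤ 1 − f(x) ≤ C₂·dist(x,L)`. -/
theorem graph_height_comparable (n : ℕ) (hn : 1 ≤ n) :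
    ∃ εstar ∈ Set.Ioo (0 : ℝ) 1, ∀ ε₀ ∈ Set.Ioo (0 : ℝ) εstar,
      ∃ C₁ C₂ : ℝ, 0 < C₁ ∧ C₁ ≤ C₂ ∧
        ∀ L : Set (EuclideanSpace ℝ (Fin (n + 1))),
          L.Nonempty → IsClosed L →
          L ⊆ Metric.sphere (0 : EuclideanSpace ℝ (Fin (n + 1))) 1 →
          L ≠ Metric.sphere (0 : EuclideanSpace ℝ (Fin (n + 1))) 1 →
          ∀ x ∈ Metric.sphere (0 : EuclideanSpace ℝ (Fin (n + 1))) 1 \ L,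
            C₁ * Metric.infDist x L ≤ 1 - graphHeight n L ε₀ x ∧
            1 - graphHeight n L ε₀ x ≤ C₂ * Metric.infDist x L := by
  refine ⟨1/2, ⟨by norm_num, by norm_num⟩, ?_⟩
  rintro ε₀ ⟨hε0, hε1⟩
  refine ⟨ε₀ / 2, 4 * ε₀, by positivity, by linarith, ?_⟩
  intro L hLne hLcl hLsub hLneq x hxmem
  obtain ⟨hxS, hxL⟩ := hxmem
  have hx1 : ‖x‖ = 1 := by simpa using hxS
  set d := Metric.infDist x L with hd
  have hd0 : 0 < d := (hLcl.notMem_iff_infDist_pos hLne).1 hxL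
  have hd2 : d ≤ 2 := by
    obtain ⟨l, hl⟩ := hLne
    have hl1 : ‖l‖ = 1 := by simpa using hLsub hl
    have h1 := Metric.infDist_le_dist_of_mem (x := x) hl
    rw [dist_eq_norm] at h1
    have h2 : ‖x - l‖ ≤ ‖x‖ + ‖l‖ := norm_sub_le x l
    rw [hx1, hl1] at h2
    linarith
  set r := ε₀ * d with hrdef
  have hr0 : 0 < r := mul_pos hε0 hd0
  have hr1 : r < 1 := by nlinarith
  set S := ({1} ∪ {t : ℝ | t ∈ Set.Ioo (0 : ℝ) 1 ∧ t • x ∈ domeUnion n L ε₀})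
    with hSdef
  have hSne : (1:ℝ) ∈ S := Or.inl rfl
  have hbdd : BddBelow S := by
    refine ⟨0, ?_⟩
    rintro t (ht | ⟨⟨ht0, ht1⟩, -⟩)
    · rw [Set.mem_singleton_iff] at ht; rw [ht]; norm_num
    · linarith
  -- every element of S is at least 1 - 4ε₀d
  have hlow : ∀ t ∈ S, 1 - 4 * ε₀ * d ≤ t := by
    rintro t (ht | ⟨⟨ht0, ht1⟩, htmem⟩)
    · rw [Set.mem_singleton_iff] at ht
      rw [ht]; nlinarith
    · simp only [domeUnion, Set.mem_iUnion] at htmem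
      obtain ⟨w, hwmem, htw⟩ := htmem
      obtain ⟨hwS, hwL⟩ := hwmem
      have hw1 : ‖w‖ = 1 := by simpa using hwS
      set dw := Metric.infDist w L with hdw
      have hdw0 : 0 < dw := (hLcl.notMem_iff_infDist_pos hLne).1 hwL
      have hdw2 : dw ≤ 2 := by
        obtain ⟨l, hl⟩ := hLne
        have hl1 : ‖l‖ = 1 := by simpa using hLsub hl
        have h1 := Metric.infDist_le_dist_of_mem (x := w) hl
        rw [dist_eq_norm] at h1
        have h2 : ‖w - l‖ ≤ ‖w‖ + ‖l‖ := norm_sub_le w l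
        rw [hw1, hl1] at h2
        linarith
      have hrw0 : 0 < ε₀ * dw := mul_pos hε0 hdw0
      have hrw1 : ε₀ * dw < 1 := by nlinarith
      obtain ⟨hht, hhxw⟩ := dome_mem_bounds n x w hx1 hw1 hrw0 hrw1 ht0 ht1 htw
      -- dw ≤ d + dist w x < d + ε₀ * dw
      have htriangle : dw ≤ d + dist w x := by
        have := Metric.infDist_le_infDist_add_dist (x := w) (y := x) (s := L)
        linarith [this]
      have hdist : dist w x < ε₀ * dw := by
        rw [dist_eq_norm, ← norm_neg, neg_sub]
        exact hhxw
      have hdw_lt : dw < 2 * d := by nlinarith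
      -- (1-t)^2 < 2*(ε₀*dw)^2 < 2*(2*ε₀*d)^2 = 8*(ε₀*d)^2 < (4*ε₀*d)^2
      have hdwsq : dw ^ 2 < 4 * d ^ 2 := by nlinarith
      have hsq2 : ε₀ ^ 2 * dw ^ 2 < ε₀ ^ 2 * (4 * d ^ 2) :=
        mul_lt_mul_of_pos_left hdwsq (by positivity)
      have hfin : (1 - t) ^ 2 < (4 * ε₀ * d) ^ 2 := by
        nlinarith [mul_pos (mul_pos hε0 hε0) (mul_pos hd0 hd0)]
      have := lt_of_pow_lt_pow_left₀ 2 (by positivity : (0:ℝ) ≤ 4 * ε₀ * d) hfin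
      linarith
  have h1 : 1 - 4 * ε₀ * d ≤ graphHeight n L ε₀ x := le_csInf ⟨1, hSne⟩ hlow
  -- t = 1 - r/2 is in S
  have hmem : (1 - r / 2) ∈ S := by
    refine Or.inr ⟨⟨by linarith, by linarith⟩, ?_⟩
    simp only [domeUnion, Set.mem_iUnion]
    refine ⟨x, ⟨hxS, hxL⟩, ?_⟩
    rw [← hd, ← hrdef]
    apply mem_dome_radial n x hx1 hr0 hr1 (by linarith) (by linarith)
    nlinarith
  have h2 : graphHeight n L ε₀ x ≤ 1 - r / 2 := csInf_le hbdd hmem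
  constructor
  · have he : ε₀ / 2 * d = r / 2 := by rw [hrdef]; ring
    linarith [he]
  · linarith
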